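/- Let α : V × V → Λ be a symmetric bilinear map satisfying ⟨α(X,Y),w⟩ = −(X,Y) for all X,Y ∈ V, with associated bilinear map β flat. If the subspace S(β) ⊂ W is degenerate, then 1 ≤ s ≤ p−1 and there exists a light-like vector v ∈ U₀ (v ≠ 0, ⟨v,v⟩ = 0) such that S(β) ∩ S(β)^⊥ = span{(v,0),(0,v)}. -/

import Mathlib

open Module

/-- If β is flat and S(β) is degenerate, then 1 ≤ s ≤ p−1 and there is a
light-like v ∈ U₀ with S(β) ∩ S(β)^⊥ = span{(v,0),(0,v)}. -/
theorem stmt_5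
    (n p : ℕ) (hn : 1 ≤ n) (hp : 2 ≤ p)
    {V : Type} [AddCommGroup V] [Module ℝ V] [FiniteDimensional ℝ V]
    (hV : finrank ℝ V = 2 * n)
    (J : V →ₗ[ℝ] V) (hJ : ∀ X, J (J X) = -X)
    {Λ : Type} [AddCommGroup Λ] [Module ℝ Λ] [FiniteDimensional ℝ Λ]
    (hΛ : finrank ℝ Λ = p)
    (ip : LinearMap.BilinForm ℝ Λ) (hipsymm : ∀ ξ η, ip ξ η = ip η ξ)
    (e : Basis (Fin p) ℝ Λ)
    (he : ∀ i j, ip (e i) (e j) =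
      if i = j then (if (i : ℕ) = 0 then (-1 : ℝ) else 1) else 0)
    (g : LinearMap.BilinForm ℝ V) (hgsymm : ∀ X Y, g X Y = g Y X)
    (hgpos : ∀ X : V, X ≠ 0 → 0 < g X X)
    (hgJ : ∀ X Y, g (J X) (J Y) = g X Y)
    (α : V →ₗ[ℝ] V →ₗ[ℝ] Λ) (hαsymm : ∀ X Y, α X Y = α Y X)
    (w : Λ) (hw0 : w ≠ 0) (hww : ip w w = 0)
    (hαw : ∀ X Y, ip (α X Y) w = - g X Y)
    (bW : LinearMap.BilinForm ℝ (Λ × Λ))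
    (hbW : ∀ ξ η, bW ξ η = ip ξ.1 η.1 - ip ξ.2 η.2)
    (β : V → V → Λ × Λ)
    (hβ : ∀ X Y, β X Y = (α X Y + α (J X) (J Y), α X (J Y) - α (J X) Y))
    (hflat : ∀ X Y Z T, bW (β X Y) (β Z T) = bW (β X T) (β Z Y))
    (Sβ : Submodule ℝ (Λ × Λ))
    (hSβ : Sβ = Submodule.span ℝ {z : Λ × Λ | ∃ X Y, z = β X Y})
    (U₀ : Submodule ℝ Λ)
    (hU₀ : U₀ = Submodule.map (LinearMap.fst ℝ Λ Λ) Sβ)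
    (s : ℕ) (hs : s = finrank ℝ U₀)
    (hdeg : Sβ ⊓ bW.orthogonal Sβ ≠ ⊥) :
    1 ≤ s ∧ s ≤ p - 1 ∧
      ∃ v : Λ, v ∈ U₀ ∧ v ≠ 0 ∧ ip v v = 0 ∧
        Sβ ⊓ bW.orthogonal Sβ =
          Submodule.span ℝ {((v, 0) : Λ × Λ), ((0, v) : Λ × Λ)} := by
  classical
  set N : Submodule ℝ (Λ × Λ) := Sβ ⊓ bW.orthogonal Sβ with hNdef
  -- the two symmetries
  set C : (Λ × Λ) →ₗ[ℝ] (Λ × Λ) :=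
    (LinearMap.fst ℝ Λ Λ).prod (-(LinearMap.snd ℝ Λ Λ)) with hCdef
  set T : (Λ × Λ) →ₗ[ℝ] (Λ × Λ) :=
    (LinearMap.snd ℝ Λ Λ).prod (-(LinearMap.fst ℝ Λ Λ)) with hTdef
  have hCapp : ∀ z : Λ × Λ, C z = (z.1, -z.2) := fun z => rfl
  have hTapp : ∀ z : Λ × Λ, T z = (z.2, -z.1) := fun z => rfl
  -- C and T map the generating set into itself
  have hCβ : ∀ X Y, C (β X Y) = β Y X := by
    intro X Y
    rw [hCapp, hβ, hβ]
    refine Prod.ext ?_ ?_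
    · simp only
      rw [hαsymm Y X, hαsymm (J Y) (J X)]
    · simp only
      rw [hαsymm Y (J X), hαsymm (J Y) X]
      abel
  have hTβ : ∀ X Y, T (β X Y) = β X (J Y) := by
    intro X Y
    rw [hTapp, hβ, hβ]
    refine Prod.ext ?_ ?_
    · simp only [hJ, map_neg]
      abel
    · simp only [hJ, map_neg]
      abel
  -- C and T preserve Sβ
  have hCS : ∀ z ∈ Sβ, C z ∈ Sβ := by
    intro z hz
    rw [hSβ] at hz ⊢
    refine Submodule.span_induction ?_ ?_ ?_ ?_ hz
    · rintro x ⟨X, Y, rfl⟩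
      exact Submodule.subset_span ⟨Y, X, hCβ X Y⟩
    · simpa using Submodule.zero_mem _
    · intro x y _ _ hx hy
      simpa [map_add] using Submodule.add_mem _ hx hy
    · intro c x _ hx
      simpa [map_smul] using Submodule.smul_mem _ c hx
  have hTS : ∀ z ∈ Sβ, T z ∈ Sβ := by
    intro z hz
    rw [hSβ] at hz ⊢
    refine Submodule.span_induction ?_ ?_ ?_ ?_ hz
    · rintro x ⟨X, Y, rfl⟩
      exact Submodule.subset_span ⟨X, J Y, hTβ X Y⟩
    · simpa using Submodule.zero_mem _
    · intro x y _ _ hx hy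
      simpa [map_add] using Submodule.add_mem _ hx hy
    · intro c x _ hx
      simpa [map_smul] using Submodule.smul_mem _ c hx
  -- C and T preserve the orthogonal complement
  have hCO : ∀ z ∈ bW.orthogonal Sβ, C z ∈ bW.orthogonal Sβ := by
    intro z hz y hy
    have h1 := hz (C y) (hCS y hy)
    have e1 : bW (C y) z = ip y.1 z.1 + ip y.2 z.2 := by
      rw [hbW, hCapp]; simp only [map_neg, LinearMap.neg_apply]; ring
    have e2 : bW y (C z) = ip y.1 z.1 + ip y.2 z.2 := by
      rw [hbW, hCapp]; simp only [map_neg]; ring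
    show bW y (C z) = 0
    rw [e2, ← e1]
    exact h1
  have hTO : ∀ z ∈ bW.orthogonal Sβ, T z ∈ bW.orthogonal Sβ := by
    intro z hz y hy
    have h1 := hz (T y) (hTS y hy)
    have e1 : bW (T y) z = ip y.2 z.1 + ip y.1 z.2 := by
      rw [hbW, hTapp]; simp only [map_neg, LinearMap.neg_apply]; ring
    have e2 : bW y (T z) = ip y.1 z.2 + ip y.2 z.1 := by
      rw [hbW, hTapp]; simp only [map_neg]; ring
    show bW y (T z) = 0
    have h1' : ip y.2 z.1 + ip y.1 z.2 = 0 := by rw [← e1]; exact h1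
    rw [e2]
    linarith
  -- C and T preserve N
  have hCN : ∀ z ∈ N, C z ∈ N := by
    intro z hz
    rw [hNdef, Submodule.mem_inf] at hz ⊢
    exact ⟨hCS z hz.1, hCO z hz.2⟩
  have hTN : ∀ z ∈ N, T z ∈ N := by
    intro z hz
    rw [hNdef, Submodule.mem_inf] at hz ⊢
    exact ⟨hTS z hz.1, hTO z hz.2⟩
  -- both components of an element of N give elements (u,0) ∈ N
  have hM : ∀ z ∈ N, ((z.1, (0 : Λ)) ∈ N ∧ (z.2, (0 : Λ)) ∈ N) := by
    intro z hz
    have h1 : ((z.1, (0 : Λ)) : Λ × Λ) = (2⁻¹ : ℝ) • (z + C z) := by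
      rw [hCapp]
      refine Prod.ext ?_ ?_
      · show z.1 = (2⁻¹ : ℝ) • (z.1 + z.1)
        rw [← two_smul ℝ z.1, smul_smul]; norm_num
      · show (0 : Λ) = (2⁻¹ : ℝ) • (z.2 + -z.2)
        simp
    have h2 : ((0 : Λ), z.2) = (2⁻¹ : ℝ) • (z - C z) := by
      rw [hCapp]
      refine Prod.ext ?_ ?_
      · show (0 : Λ) = (2⁻¹ : ℝ) • (z.1 - z.1)
        simp
      · show z.2 = (2⁻¹ : ℝ) • (z.2 - -z.2)
        rw [sub_neg_eq_add, ← two_smul ℝ z.2, smul_smul]; norm_num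
    have hz1 : ((z.1, (0 : Λ)) : Λ × Λ) ∈ N := by
      rw [h1]; exact N.smul_mem _ (N.add_mem hz (hCN z hz))
    have hz2' : (((0 : Λ), z.2) : Λ × Λ) ∈ N := by
      rw [h2]; exact N.smul_mem _ (N.sub_mem hz (hCN z hz))
    refine ⟨hz1, ?_⟩
    have := hTN _ hz2'
    rw [hTapp] at this
    simpa using this
  -- the ip-products of "M"-elements vanish
  have hMip : ∀ u u' : Λ, ((u, (0 : Λ)) : Λ × Λ) ∈ N → ((u', (0 : Λ)) : Λ × Λ) ∈ N →
      ip u u' = 0 := by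
    intro u u' h h'
    rw [hNdef, Submodule.mem_inf] at h h'
    have := h'.2 (u, 0) h.1
    have h2 : bW (u, 0) (u', 0) = ip u u' := by
      rw [hbW]; simp
    change (bW (u, 0) (u', 0) = 0) at this
    rw [h2] at this
    exact this
  -- evaluation of ip in coordinates
  have hipval : ∀ u z : Λ, ip u z =
      ∑ i : Fin p, (if (i : ℕ) = 0 then (-1 : ℝ) else 1) * (e.repr u i * e.repr z i) := by
    intro u z
    conv_lhs => rw [← e.sum_repr u, ← e.sum_repr z]
    rw [map_sum]
    refine Finset.sum_congr rfl ?_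
    intro i _
    rw [map_smul, smul_eq_mul, map_sum, LinearMap.sum_apply]
    rw [Finset.sum_eq_single i]
    · rw [map_smul, LinearMap.smul_apply, smul_eq_mul, he, if_pos rfl]
      ring
    · intro j _ hj
      rw [map_smul, LinearMap.smul_apply, smul_eq_mul, he, if_neg hj]
      ring
    · intro h; exact absurd (Finset.mem_univ i) h
  have hp0 : (0 : ℕ) < p := by omega
  set i0 : Fin p := ⟨0, hp0⟩ with hi0
  -- Lorentzian lemma: isotropic vector with vanishing 0-th coordinate is zero
  have hL1 : ∀ z : Λ, ip z z = 0 → e.repr z i0 = 0 → z = 0 := by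
    intro z h1 h2
    rw [hipval] at h1
    have hnn : ∀ i ∈ Finset.univ (α := Fin p),
        0 ≤ (if (i : ℕ) = 0 then (-1 : ℝ) else 1) * (e.repr z i * e.repr z i) := by
      intro i _
      by_cases hi : (i : ℕ) = 0
      · have : i = i0 := Fin.ext hi
        rw [this, h2]; simp
      · rw [if_neg hi, one_mul]
        exact mul_self_nonneg _
    have hall := (Finset.sum_eq_zero_iff_of_nonneg hnn).mp h1
    have hrz : ∀ i : Fin p, e.repr z i = 0 := by
      intro i
      by_cases hi : (i : ℕ) = 0
      · have : i = i0 := Fin.ext hi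
        rw [this]; exact h2
      · have := hall i (Finset.mem_univ i)
        rw [if_neg hi, one_mul] at this
        exact mul_self_eq_zero.mp this
    have : e.repr z = 0 := by ext i; exact hrz i
    have := e.repr.map_eq_zero_iff.mp this
    exact this
  -- extract a nonzero element of N
  obtain ⟨ζ, hζN, hζ0⟩ := Submodule.exists_mem_ne_zero_of_ne_bot hdeg
  obtain ⟨v, hvN, hv0⟩ : ∃ v : Λ, ((v, (0 : Λ)) : Λ × Λ) ∈ N ∧ v ≠ 0 := by
    rcases eq_or_ne ζ.1 0 with h | h
    · refine ⟨ζ.2, (hM ζ hζN).2, fun h2 => hζ0 ?_⟩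
      exact Prod.ext h h2
    · exact ⟨ζ.1, (hM ζ hζN).1, h⟩
  have hvv : ip v v = 0 := hMip v v hvN hvN
  have hv00 : e.repr v i0 ≠ 0 := fun h => hv0 (hL1 v hvv h)
  -- every "M"-element is a multiple of v
  have hdep : ∀ u : Λ, ((u, (0 : Λ)) : Λ × Λ) ∈ N → ∃ c : ℝ, u = c • v := by
    intro u hu
    have h1 : ip u u = 0 := hMip u u hu hu
    have h2 : ip u v = 0 := hMip u v hu hvN
    have h3 : ip v u = 0 := by rw [hipsymm]; exact h2
    set z : Λ := (e.repr u i0) • v - (e.repr v i0) • u with hzdef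
    have hz0 : e.repr z i0 = 0 := by
      rw [hzdef, map_sub, map_smul, map_smul]
      simp [mul_comm]
    have hzz : ip z z = 0 := by
      rw [hzdef]
      simp only [map_sub, map_smul, LinearMap.sub_apply, LinearMap.smul_apply,
        smul_eq_mul, h1, h2, h3, hvv]
      ring
    have hz := hL1 z hzz hz0
    rw [hzdef, sub_eq_zero] at hz
    refine ⟨(e.repr u i0) / (e.repr v i0), ?_⟩
    rw [div_eq_inv_mul, mul_smul, hz, smul_smul, inv_mul_cancel₀ hv00, one_smul]
  -- v ∈ U₀
  have hvS : ((v, (0 : Λ)) : Λ × Λ) ∈ Sβ := (Submodule.mem_inf.mp hvN).1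
  have hvO : ((v, (0 : Λ)) : Λ × Λ) ∈ bW.orthogonal Sβ := (Submodule.mem_inf.mp hvN).2
  have hvU : v ∈ U₀ := by
    rw [hU₀]
    exact ⟨(v, 0), hvS, rfl⟩
  -- s ≥ 1
  have hs1 : 1 ≤ s := by
    rw [hs]
    have hle : Submodule.span ℝ {v} ≤ U₀ := by
      rw [Submodule.span_le, Set.singleton_subset_iff]; exact hvU
    have := Submodule.finrank_mono hle
    rwa [finrank_span_singleton hv0] at this
  -- s ≤ p - 1
  have hs2 : s ≤ p - 1 := by
    have hflipapp : ∀ x : Λ, ip.flip v x = ip x v := fun x => rfl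
    have hU0le : U₀ ≤ LinearMap.ker (ip.flip v) := by
      rw [hU₀]
      rintro _ ⟨ξ, hξ, rfl⟩
      have h1 := hvO ξ hξ
      change (bW ξ (v, 0) = 0) at h1; rw [hbW] at h1
      simp only [map_zero] at h1
      rw [LinearMap.mem_ker, hflipapp]
      show ip ξ.1 v = 0
      linarith
    have hKne : LinearMap.ker (ip.flip v) ≠ ⊤ := by
      obtain ⟨i, hri⟩ : ∃ i : Fin p, e.repr v i ≠ 0 := by
        by_contra hc
        push_neg at hc
        apply hv0
        apply e.repr.map_eq_zero_iff.mp
        ext i; exact hc i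
      have hei : ip (e i) v ≠ 0 := by
        rw [hipval]
        rw [Finset.sum_eq_single i]
        · simp only [Basis.repr_self, Finsupp.single_eq_same]
          by_cases hi : (i : ℕ) = 0 <;> simp [hi, hri]
        · intro j _ hj
          simp [Basis.repr_self, Finsupp.single_apply, Ne.symm hj]
        · intro h; exact absurd (Finset.mem_univ i) h
      intro hKtop
      have : e i ∈ LinearMap.ker (ip.flip v) := by rw [hKtop]; trivial
      rw [LinearMap.mem_ker, hflipapp] at this
      exact hei this
    have hUlt : U₀ < ⊤ := lt_of_le_of_lt hU0le (lt_top_iff_ne_top.mpr hKne)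
    have := Submodule.finrank_lt hUlt.ne
    rw [hΛ] at this
    omega
  refine ⟨hs1, hs2, v, hvU, hv0, hvv, ?_⟩
  -- the span equality
  have hOv : (((0 : Λ), v) : Λ × Λ) ∈ N := by
    have h1 := hTN _ hvN
    rw [hTapp] at h1
    have h2 := N.neg_mem h1
    simpa using h2
  apply le_antisymm
  · intro ξ hξ
    obtain ⟨c1, hc1⟩ := hdep ξ.1 (hM ξ hξ).1
    obtain ⟨c2, hc2⟩ := hdep ξ.2 (hM ξ hξ).2
    rw [Submodule.mem_span_pair]
    refine ⟨c1, c2, ?_⟩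
    refine Prod.ext ?_ ?_
    · show c1 • v + c2 • (0 : Λ) = ξ.1
      rw [hc1]; simp
    · show c1 • (0 : Λ) + c2 • v = ξ.2
      rw [hc2]; simp
  · rw [Submodule.span_le]
    rintro x hx
    rcases hx with h | h
    · rw [h]; exact hvN
    · rw [Set.mem_singleton_iff.mp h]; exact hOv
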